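/- Let H = Σ_{j=1}^{M} H_j be a Hamiltonian on (ℂ^q)^{⊗n}, where each H_j is Hermitian with operator norm ‖H_j‖ ≤ 1 and acts nontrivially only on a set supp(H_j) of qudits, and suppose each qudit belongs to supp(H_j) for at most g values of j (bounded degree g). Then every ε-noisy ground state σ of H is a low-energy state: Tr(Hσ) ≤ λ_min(H) + 2gεn. -/

import Mathlib

open scoped Classical ComplexOrder
open Matrix

noncomputable section
namespace NoisyLowEnergy

/-- `M` acts nontrivially only on the qudits in `S`. -/
def ActsOn {ι : Type} [Fintype ι] [DecidableEq ι] (q : ℕ)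
    (M : Matrix (ι → Fin q) (ι → Fin q) ℂ) (S : Finset ι) : Prop :=
  ∃ N : Matrix ({i : ι // i ∈ S} → Fin q) ({i : ι // i ∈ S} → Fin q) ℂ,
    ∀ x y : ι → Fin q,
      M x y =
        if ∀ i ∉ S, x i = y i then N (fun i => x i.1) (fun i => y i.1) else 0

/-- Partial trace over the qudits in `S`. -/
def ptrace {ι : Type} [Fintype ι] [DecidableEq ι] (q : ℕ) (S : Finset ι)
    (M : Matrix (ι → Fin q) (ι → Fin q) ℂ) :
    Matrix ({i : ι // i ∉ S} → Fin q) ({i : ι // i ∉ S} → Fin q) ℂ :=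
  fun x y => ∑ z : {i : ι // i ∈ S} → Fin q,
    M (fun i => if h : i ∈ S then z ⟨i, h⟩ else x ⟨i, h⟩)
      (fun i => if h : i ∈ S then z ⟨i, h⟩ else y ⟨i, h⟩)

/-- A density matrix: positive semidefinite with unit trace. -/
def IsDensityMatrix {ι : Type} [Fintype ι] (M : Matrix ι ι ℂ) : Prop :=
  M.PosSemidef ∧ M.trace = 1

/-- The energy `Tr(Hρ)` of a state `ρ` for a Hamiltonian `H` (a real number). -/
def energy {ι : Type} [Fintype ι] (H ρ : Matrix ι ι ℂ) : ℝ := ((H * ρ).trace).re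

/-- The ground energy `λ_min(H)`: the infimum of `Tr(Hρ)` over density matrices `ρ`. -/
def groundEnergy {ι : Type} [Fintype ι] (H : Matrix ι ι ℂ) : ℝ :=
  sInf { e : ℝ | ∃ ρ, IsDensityMatrix ρ ∧ energy H ρ = e }

/-- A ground state: a density matrix with `Tr(Hρ) = λ_min(H)`. -/
def IsGroundState {ι : Type} [Fintype ι] (H ρ : Matrix ι ι ℂ) : Prop :=
  IsDensityMatrix ρ ∧ energy H ρ = groundEnergy H

/-- An `ε`-error state for `H`. -/
def IsEpsErrorState {n q : ℕ} (H : Matrix (Fin n → Fin q) (Fin n → Fin q) ℂ)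
    (ε : ℝ) (σ : Matrix (Fin n → Fin q) (Fin n → Fin q) ℂ) : Prop :=
  IsDensityMatrix σ ∧
    ∃ (ρ : Matrix (Fin n → Fin q) (Fin n → Fin q) ℂ) (S : Finset (Fin n)),
      IsGroundState H ρ ∧ ((S.card : ℝ) ≤ ε * n) ∧ ptrace q S σ = ptrace q S ρ

/-- An `ε`-noisy ground state of `H`: a finite convex combination of `ε`-error states. -/
def IsNoisyGroundState {n q : ℕ} (H : Matrix (Fin n → Fin q) (Fin n → Fin q) ℂ)
    (ε : ℝ) (σ : Matrix (Fin n → Fin q) (Fin n → Fin q) ℂ) : Prop :=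
  ∃ (L : Type) (_ : Fintype L) (p : L → ℝ)
      (f : L → Matrix (Fin n → Fin q) (Fin n → Fin q) ℂ),
    (∀ ℓ, 0 ≤ p ℓ) ∧ (∑ ℓ, p ℓ = 1) ∧ (∀ ℓ, IsEpsErrorState H ε (f ℓ)) ∧
    σ = ∑ ℓ, p ℓ • f ℓ

/-! ### Auxiliary lemmas -/

open scoped MatrixOrder in
lemma re_trace_psd_nonneg {ι : Type} [Fintype ι] [DecidableEq ι] {A B : Matrix ι ι ℂ}
    (hA : A.PosSemidef) (hB : B.PosSemidef) : 0 ≤ ((A * B).trace).re := by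
  obtain ⟨C, rfl⟩ : ∃ C : Matrix ι ι ℂ, B = Cᴴ * C := by
    obtain ⟨X, hX, -, hXB⟩ :=
      CFC.exists_sqrt_of_isSelfAdjoint_of_quasispectrumRestricts hB.isHermitian
        (QuasispectrumRestricts.nnreal_of_nonneg hB.nonneg)
    refine ⟨X, ?_⟩
    rw [← hXB, ← Matrix.star_eq_conjTranspose, hX.star_eq]
  have h1 : (A * (Cᴴ * C)).trace = (C * A * Cᴴ).trace := by
    rw [← Matrix.mul_assoc, Matrix.trace_mul_comm, ← Matrix.mul_assoc]
  rw [h1]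
  have h2 := hA.mul_mul_conjTranspose_same C
  have h : ∀ i, 0 ≤ (C * A * Cᴴ) i i := by
    intro i
    exact h2.diag_nonneg
  have h3 : 0 ≤ (C * A * Cᴴ).trace := by
    unfold Matrix.trace
    exact Finset.sum_nonneg fun i _ => h i
  exact (Complex.le_def.mp h3).1

lemma re_trace_le_one {ι : Type} [Fintype ι] [DecidableEq ι] {Hj τ : Matrix ι ι ℂ}
    (h1 : (1 - Hj).PosSemidef) (hτ : τ.PosSemidef) (htr : τ.trace = 1) :
    ((Hj * τ).trace).re ≤ 1 := by
  have h0 := re_trace_psd_nonneg h1 hτ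
  have he : (1 - Hj) * τ = τ - Hj * τ := by rw [sub_mul, one_mul]
  rw [he, Matrix.trace_sub, Complex.sub_re, htr] at h0
  simp only [Complex.one_re] at h0; linarith

lemma neg_one_le_re_trace {ι : Type} [Fintype ι] [DecidableEq ι] {Hj τ : Matrix ι ι ℂ}
    (h1 : (1 + Hj).PosSemidef) (hτ : τ.PosSemidef) (htr : τ.trace = 1) :
    -1 ≤ ((Hj * τ).trace).re := by
  have h0 := re_trace_psd_nonneg h1 hτ
  have he : (1 + Hj) * τ = τ + Hj * τ := by rw [add_mul, one_mul]
  rw [he, Matrix.trace_add, Complex.add_re, htr] at h0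
  simp only [Complex.one_re] at h0; linarith

lemma trace_actsOn_repr {n q : ℕ} {A : Matrix (Fin n → Fin q) (Fin n → Fin q) ℂ}
    {T S : Finset (Fin n)}
    (N : Matrix ({i : Fin n // i ∈ T} → Fin q) ({i : Fin n // i ∈ T} → Fin q) ℂ)
    (hN : ∀ x y, A x y = if ∀ i ∉ T, x i = y i then N (fun i => x i.1) (fun i => y i.1) else 0)
    (hdisj : ∀ i ∈ T, i ∉ S)
    (τ : Matrix (Fin n → Fin q) (Fin n → Fin q) ℂ) :
    (A * τ).trace =
      ∑ u : {i : Fin n // i ∉ S} → Fin q, ∑ b : {i : Fin n // i ∈ T} → Fin q,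
        N (fun i => u ⟨i.1, hdisj i.1 i.2⟩) b *
          ptrace q S τ (fun i => if h : i.1 ∈ T then b ⟨i.1, h⟩ else u i) u := by
  classical
  have e1 : (A * τ).trace = ∑ x, ∑ y, A x y * τ y x := by
    simp [Matrix.trace, Matrix.mul_apply, Matrix.diag]
  have e2 : ∀ x : Fin n → Fin q, (∑ y, A x y * τ y x)
      = ∑ b : {i : Fin n // i ∈ T} → Fin q,
          N (fun i => x i.1) b * τ (fun i => if h : i ∈ T then b ⟨i, h⟩ else x i) x := by
    intro x
    rw [← Equiv.sum_comp (Equiv.piEquivPiSubtypeProd (· ∈ T) (fun _ => Fin q)).symm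
        (fun y => A x y * τ y x), Fintype.sum_prod_type]
    refine Finset.sum_congr rfl fun b _ => ?_
    rw [Finset.sum_eq_single (fun i : {i : Fin n // ¬ i ∈ T} => x i.1)]
    · have harg : ((Equiv.piEquivPiSubtypeProd (· ∈ T) (fun _ => Fin q)).symm
          (b, fun i : {i : Fin n // ¬ i ∈ T} => x i.1))
          = fun i => if h : i ∈ T then b ⟨i, h⟩ else x i := by
        funext i
        simp [Equiv.piEquivPiSubtypeProd]
      rw [harg]
      have hA : A x (fun i => if h : i ∈ T then b ⟨i, h⟩ else x i)
          = N (fun i => x i.1) b := by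
        rw [hN, if_pos]
        · have hb : (fun i : {i : Fin n // i ∈ T} =>
              if h : (i : Fin n) ∈ T then b ⟨i, h⟩ else x i) = b := by
            funext i; simp [i.2]
          exact congrArg _ hb
        · intro i hi; simp [hi]
      rw [hA]
    · intro c _ hc
      have hz : A x ((Equiv.piEquivPiSubtypeProd (· ∈ T) (fun _ => Fin q)).symm (b, c)) = 0 := by
        rw [hN, if_neg]
        intro hcond
        apply hc
        funext i
        have := hcond i.1 i.2
        simpa [Equiv.piEquivPiSubtypeProd, i.2] using this.symm
      simp [hz]
    · intro h; exact absurd (Finset.mem_univ _) h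
  calc (A * τ).trace = ∑ x, ∑ b : {i : Fin n // i ∈ T} → Fin q,
          N (fun i => x i.1) b * τ (fun i => if h : i ∈ T then b ⟨i, h⟩ else x i) x := by
        rw [e1]; exact Finset.sum_congr rfl fun x _ => e2 x
    _ = _ := by
        rw [← Equiv.sum_comp (Equiv.piEquivPiSubtypeProd (· ∈ S) (fun _ => Fin q)).symm,
          Fintype.sum_prod_type, Finset.sum_comm]
        refine Finset.sum_congr rfl fun u _ => ?_
        rw [Finset.sum_comm]
        refine Finset.sum_congr rfl fun b _ => ?_
        unfold ptrace
        rw [Finset.mul_sum]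
        refine Finset.sum_congr rfl fun z _ => ?_
        set w := (Equiv.piEquivPiSubtypeProd (· ∈ S) (fun _ => Fin q)).symm (z, u) with hw
        have hw' : w = fun i => if h : i ∈ S then z ⟨i, h⟩ else u ⟨i, h⟩ := by
          funext i; simp [hw, Equiv.piEquivPiSubtypeProd]
        have h1 : (fun i : {i : Fin n // i ∈ T} => w i.1)
            = (fun i : {i : Fin n // i ∈ T} => u ⟨i.1, hdisj i.1 i.2⟩) := by
          funext i
          have hiS : (i : Fin n) ∉ S := hdisj i.1 i.2
          simp [hw', hiS]
        have h2 : (fun i => if h : i ∈ T then b ⟨i, h⟩ else w i)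
            = (fun i => if h : i ∈ S then z ⟨i, h⟩
                else (fun j : {i : Fin n // i ∉ S} =>
                  if h' : (j : Fin n) ∈ T then b ⟨j, h'⟩ else u j) ⟨i, h⟩) := by
          funext i
          by_cases hT : i ∈ T
          · have hiS : i ∉ S := hdisj i hT
            simp [hw', hT, hiS]
          · by_cases hS : i ∈ S <;> simp [hw', hT, hS]
        rw [h1, h2]
        congr 1

lemma trace_eq_of_ptrace_eq {n q : ℕ} {A σ ρ : Matrix (Fin n → Fin q) (Fin n → Fin q) ℂ}
    {T S : Finset (Fin n)} (hA : ActsOn q A T) (hdisj : ∀ i ∈ T, i ∉ S)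
    (hpt : ptrace q S σ = ptrace q S ρ) : (A * σ).trace = (A * ρ).trace := by
  obtain ⟨N, hN⟩ := hA
  have hN' : ∀ x y : Fin n → Fin q,
      A x y = if ∀ i ∉ T, x i = y i then N (fun i => x i.1) (fun i => y i.1) else 0 := by
    intro x y
    rw [hN x y]
    congr
  rw [trace_actsOn_repr N hN' hdisj σ, trace_actsOn_repr N hN' hdisj ρ, hpt]

/-- for a bounded-degree local Hamiltonian `H = Σ_j H_j` (each `H_j`
Hermitian of operator norm at most `1`, i.e. `1 ± H_j` PSD, supported on `supp(H_j)`,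
with each qudit in the support of at most `g` terms), every `ε`-noisy ground state `σ`
satisfies `Tr(Hσ) ≤ λ_min(H) + 2gεn`. -/
theorem noisy_ground_state_low_energy (q n M g : ℕ) (hq : 0 < q)
    (terms : Fin M → Matrix (Fin n → Fin q) (Fin n → Fin q) ℂ)
    (supps : Fin M → Finset (Fin n))
    (hherm : ∀ j, (terms j).IsHermitian)
    (hnorm : ∀ j, (1 - terms j).PosSemidef ∧ (1 + terms j).PosSemidef)
    (hloc : ∀ j, ActsOn q (terms j) (supps j))
    (hdeg : ∀ i : Fin n, (Finset.univ.filter (fun j => i ∈ supps j)).card ≤ g)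
    (ε : ℝ) (hε : 0 ≤ ε)
    (σ : Matrix (Fin n → Fin q) (Fin n → Fin q) ℂ)
    (hσ : IsNoisyGroundState (∑ j, terms j) ε σ) :
    energy (∑ j, terms j) σ ≤ groundEnergy (∑ j, terms j) + 2 * g * ε * n := by
  classical
  obtain ⟨L, _, p, f, hp0, hp1, herr, hσeq⟩ := hσ
  have hesum : ∀ τ : Matrix (Fin n → Fin q) (Fin n → Fin q) ℂ,
      energy (∑ j, terms j) τ = ∑ j, energy (terms j) τ := by
    intro τ
    simp [energy, Finset.sum_mul, Matrix.trace_sum, Complex.re_sum]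
  have key : ∀ ℓ, energy (∑ j, terms j) (f ℓ)
      ≤ groundEnergy (∑ j, terms j) + 2 * g * ε * n := by
    intro ℓ
    obtain ⟨hfd, ρ, S, ⟨hρd, hρE⟩, hScard, hpt⟩ := herr ℓ
    set J : Finset (Fin M) := Finset.univ.filter (fun j => ∃ i ∈ supps j, i ∈ S) with hJ
    have hJcard : (J.card : ℝ) ≤ (g : ℝ) * S.card := by
      have hsub : J ⊆ S.biUnion (fun i => Finset.univ.filter (fun j => i ∈ supps j)) := by
        intro j hj
        rw [hJ, Finset.mem_filter] at hj
        obtain ⟨i, hi1, hi2⟩ := hj.2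
        exact Finset.mem_biUnion.mpr ⟨i, hi2, by simp [hi1]⟩
      have h1 : J.card ≤ ∑ i ∈ S, (Finset.univ.filter (fun j => i ∈ supps j)).card :=
        le_trans (Finset.card_le_card hsub) Finset.card_biUnion_le
      have h2 : ∑ i ∈ S, (Finset.univ.filter (fun j => i ∈ supps j)).card
          ≤ ∑ _i ∈ S, g := Finset.sum_le_sum fun i _ => hdeg i
      have h3 : J.card ≤ S.card * g := by
        simpa [Finset.sum_const, smul_eq_mul] using h1.trans h2
      calc (J.card : ℝ) ≤ ((S.card * g : ℕ) : ℝ) := by exact_mod_cast h3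
        _ = (g : ℝ) * S.card := by push_cast; ring
    have hsame : ∀ j ∉ J, energy (terms j) (f ℓ) = energy (terms j) ρ := by
      intro j hj
      have hdisj : ∀ i ∈ supps j, i ∉ S := by
        intro i hi hiS
        exact hj (by rw [hJ, Finset.mem_filter]; exact ⟨Finset.mem_univ _, i, hi, hiS⟩)
      unfold energy
      rw [trace_eq_of_ptrace_eq (hloc j) hdisj hpt]
    have hdiff : energy (∑ j, terms j) (f ℓ) - energy (∑ j, terms j) ρ
        ≤ 2 * J.card := by
      rw [hesum, hesum, ← Finset.sum_sub_distrib]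
      have hz : ∑ j, (energy (terms j) (f ℓ) - energy (terms j) ρ)
          = ∑ j ∈ J, (energy (terms j) (f ℓ) - energy (terms j) ρ) := by
        symm
        apply Finset.sum_subset (Finset.subset_univ J)
        intro j _ hj
        rw [hsame j hj, sub_self]
      rw [hz]
      calc ∑ j ∈ J, (energy (terms j) (f ℓ) - energy (terms j) ρ)
          ≤ ∑ _j ∈ J, (2 : ℝ) := by
            refine Finset.sum_le_sum fun j _ => ?_
            have hu : energy (terms j) (f ℓ) ≤ 1 :=
              re_trace_le_one (hnorm j).1 hfd.1 hfd.2
            have hl : -1 ≤ energy (terms j) ρ :=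
              neg_one_le_re_trace (hnorm j).2 hρd.1 hρd.2
            linarith
        _ = 2 * J.card := by
            rw [Finset.sum_const, nsmul_eq_mul]; ring
    have hbound : (2 : ℝ) * J.card ≤ 2 * g * ε * n := by
      have h4 : (J.card : ℝ) ≤ (g : ℝ) * (ε * n) :=
        hJcard.trans (mul_le_mul_of_nonneg_left hScard (Nat.cast_nonneg g))
      nlinarith [h4]
    linarith [hdiff, hbound, hρE.le, hρE.ge]
  have hconv : energy (∑ j, terms j) σ = ∑ ℓ, p ℓ * energy (∑ j, terms j) (f ℓ) := by
    rw [hσeq]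
    simp only [energy, Matrix.mul_sum, Matrix.trace_sum, Complex.re_sum, mul_smul_comm,
      Matrix.trace_smul]
    refine Finset.sum_congr rfl fun ℓ _ => ?_
    rw [Complex.real_smul, Complex.mul_re]
    simp
  rw [hconv]
  calc ∑ ℓ, p ℓ * energy (∑ j, terms j) (f ℓ)
      ≤ ∑ ℓ, p ℓ * (groundEnergy (∑ j, terms j) + 2 * g * ε * n) :=
        Finset.sum_le_sum fun ℓ _ => mul_le_mul_of_nonneg_left (key ℓ) (hp0 ℓ)
    _ = groundEnergy (∑ j, terms j) + 2 * g * ε * n := by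
        rw [← Finset.sum_mul, hp1, one_mul]


end NoisyLowEnergy
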